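/- For every bipartite multigraph G and every function f : V(G) → ℕ with f(v) ≥ 1 for all v, the f-chromatic index satisfies χ'_f(G) = Δ_f(G). -/

import Mathlib

open Classical

noncomputable section

namespace MG

variable {V : Type} {E : Type} [Fintype V] [Fintype E] [DecidableEq V]

/-- The number of times vertex `v` occurs as an endpoint of the unordered pair `s`
(so a loop at `v` counts twice). -/
def mult (v : V) (s : Sym2 V) : ℕ :=
  Sym2.lift ⟨fun a b => (if a = v then 1 else 0) + (if b = v then 1 else 0),
    fun _ _ => add_comm _ _⟩ s

/-- The degree of a vertex in the multigraph whose edges `E` have endpoints given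
by `ends` (loops count twice). -/
def degree (ends : E → Sym2 V) (v : V) : ℕ := ∑ e : E, mult v (ends e)

/-- Maximum degree `Δ(G)`. -/
def maxDegree (ends : E → Sym2 V) : ℕ := Finset.univ.sup fun v => degree ends v

/-- `e(S)`: the number of edges with all endpoints in `S`. -/
def edgesWithin (ends : E → Sym2 V) (S : Finset V) : ℕ :=
  (Finset.univ.filter fun e => ∀ v ∈ ends e, v ∈ S).card

/-- The degree of `v` in the subgraph induced by `S`. -/
def degreeIn (ends : E → Sym2 V) (S : Finset V) (v : V) : ℕ :=
  ∑ e ∈ Finset.univ.filter (fun e => ∀ u ∈ ends e, u ∈ S), mult v (ends e)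

/-- Adjacency; a vertex with a loop is adjacent to itself. -/
def Adj (ends : E → Sym2 V) (u v : V) : Prop := ∃ e, ends e = s(u, v)

/-- The multigraph has no loops. -/
def Loopless (ends : E → Sym2 V) : Prop := ∀ e, ¬ (ends e).IsDiag

/-- Reachability by walks. -/
def Reaches (ends : E → Sym2 V) (u v : V) : Prop :=
  Relation.ReflTransGen (Adj ends) u v

/-- The connected component of `v`, as a set of vertices. -/
def component (ends : E → Sym2 V) (v : V) : Finset V :=
  Finset.univ.filter fun u => Reaches ends v u

/-- A pseudoforest: every connected component contains at most one cycle
(a loop counts as a cycle); equivalently, every connected component has at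
most as many edges as vertices. -/
def IsPseudoforest (ends : E → Sym2 V) : Prop :=
  ∀ v : V, edgesWithin ends (component ends v) ≤ (component ends v).card

/-- A forest (acyclic multigraph): every connected component has strictly fewer
edges than vertices. -/
def IsForest (ends : E → Sym2 V) : Prop :=
  ∀ v : V, edgesWithin ends (component ends v) + 1 ≤ (component ends v).card

/-- An orientation assigns to each edge an ordered pair of its endpoints
(tail, head). -/
def IsOrientation (ends : E → Sym2 V) (D : E → V × V) : Prop :=
  ∀ e, Sym2.mk (D e).1 (D e).2 = ends e

/-- Indegree of `v` under the orientation `D`. -/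
def inDeg (D : E → V × V) (v : V) : ℕ := (Finset.univ.filter fun e => (D e).2 = v).card

/-- Outdegree of `v` under the orientation `D`. -/
def outDeg (D : E → V × V) (v : V) : ℕ := (Finset.univ.filter fun e => (D e).1 = v).card

/-- `G` is `(g,h)`-orientable: there is an orientation in which every vertex `v`
has indegree at most `g v` and outdegree at most `h v`. -/
def GHOrientable (ends : E → Sym2 V) (g h : V → ℕ∞) : Prop :=
  ∃ D : E → V × V, IsOrientation ends D ∧
    (∀ v, (inDeg D v : ℕ∞) ≤ g v) ∧ (∀ v, (outDeg D v : ℕ∞) ≤ h v)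

/-- `(g,h)` is a valid pair of functions for `G`. -/
def ValidPair (ends : E → Sym2 V) (g h : V → ℕ∞) : Prop :=
  (∀ v : V, 1 ≤ g v + h v) ∧
  (∀ u v : V, Adj ends u v → 1 ≤ g u + g v) ∧
  (∀ u v : V, Adj ends u v → 1 ≤ h u + h v)

/-- The endpoint map of the subgraph consisting of the edges satisfying `P`. -/
def subEnds (ends : E → Sym2 V) (P : E → Prop) : {e // P e} → Sym2 V :=
  fun e => ends e.val

/-- A `(g,h)`-oriented-coloring: each color class is a `(g,h)`-orientable subgraph. -/
def GHColoring (ends : E → Sym2 V) (g h : V → ℕ∞) {k : ℕ} (C : E → Fin k) : Prop :=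
  ∀ c : Fin k, GHOrientable (subEnds ends fun e => C e = c) g h

/-- The `(g,h)`-oriented chromatic index `χ'_{(g,h)}(G)`. -/
def ghChromaticIndex (ends : E → Sym2 V) (g h : V → ℕ∞) : ℕ :=
  sInf {k | ∃ C : E → Fin k, GHColoring ends g h C}

/-- Ceiling division `⌈a/b⌉` on ℕ. -/
def cdiv (a b : ℕ) : ℕ := (a + b - 1) / b

/-- Replace `∞` values of `g` by the maximum degree `Δ(G)`. -/
def trunc (ends : E → Sym2 V) (g : V → ℕ∞) (v : V) : ℕ :=
  WithTop.untopD (maxDegree ends) (g v)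

/-- The weighted maximum degree `Δ_{(g,h)}(G) = max_v ⌈d(v)/(g(v)+h(v))⌉`
(values `∞` of `g, h` replaced by `Δ(G)`). -/
def ghMaxDegree (ends : E → Sym2 V) (g h : V → ℕ∞) : ℕ :=
  Finset.univ.sup fun v => cdiv (degree ends v) (trunc ends g v + trunc ends h v)

/-- The weighted maximum density
`W_{(g,h)}(G) = max_{S, g(S) ≥ 1, h(S) ≥ 1} ⌈e(S)/min{g(S),h(S)}⌉`
(values `∞` of `g, h` replaced by `Δ(G)`). -/
def ghMaxDensity (ends : E → Sym2 V) (g h : V → ℕ∞) : ℕ :=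
  (Finset.univ.filter fun S : Finset V =>
      (1 ≤ ∑ v ∈ S, g v) ∧ (1 ≤ ∑ v ∈ S, h v)).sup
    fun S => cdiv (edgesWithin ends S)
      (min (∑ v ∈ S, trunc ends g v) (∑ v ∈ S, trunc ends h v))

/-- An edge-coloring into pseudoforests. -/
def PaColoring (ends : E → Sym2 V) {k : ℕ} (C : E → Fin k) : Prop :=
  ∀ c : Fin k, IsPseudoforest (subEnds ends fun e => C e = c)

/-- The pseudoarboricity `pa(G)`. -/
def pa (ends : E → Sym2 V) : ℕ := sInf {k | ∃ C : E → Fin k, PaColoring ends C}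

/-- An edge-coloring into degree-`f` pseudoforests. -/
def PafColoring (ends : E → Sym2 V) (f : V → ℕ) {k : ℕ} (C : E → Fin k) : Prop :=
  ∀ c : Fin k, IsPseudoforest (subEnds ends fun e => C e = c) ∧
    ∀ v, degree (subEnds ends fun e => C e = c) v ≤ f v

/-- The degree-`f` pseudoarboricity `pa_f(G)`. -/
def paf (ends : E → Sym2 V) (f : V → ℕ) : ℕ :=
  sInf {k | ∃ C : E → Fin k, PafColoring ends f C}

/-- The weighted maximum degree `Δ_f(G) = max_v ⌈d(v)/f(v)⌉`. -/
def fMaxDegree (ends : E → Sym2 V) (f : V → ℕ) : ℕ :=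
  Finset.univ.sup fun v => cdiv (degree ends v) (f v)

/-- An edge-coloring into degree-`f` forests. -/
def AfColoring (ends : E → Sym2 V) (f : V → ℕ) {k : ℕ} (C : E → Fin k) : Prop :=
  ∀ c : Fin k, IsForest (subEnds ends fun e => C e = c) ∧
    ∀ v, degree (subEnds ends fun e => C e = c) v ≤ f v

/-- The degree-`f` arboricity `a_f(G)`. -/
def af (ends : E → Sym2 V) (f : V → ℕ) : ℕ :=
  sInf {k | ∃ C : E → Fin k, AfColoring ends f C}

/-- The arboricity `a(G)`. -/
def arboricity (ends : E → Sym2 V) : ℕ :=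
  sInf {k | ∃ C : E → Fin k, ∀ c : Fin k, IsForest (subEnds ends fun e => C e = c)}

/-- The linear arboricity `la(G)`: color classes are linear forests, i.e.
degree-2 forests. -/
def la (ends : E → Sym2 V) : ℕ := af ends fun _ => 2

/-- `G` is `k`-degenerate: every (induced, nonempty) subgraph has a vertex of
degree at most `k`. -/
def Degenerate (ends : E → Sym2 V) (k : ℕ) : Prop :=
  ∀ S : Finset V, S.Nonempty → ∃ v ∈ S, degreeIn ends S v ≤ k

/-- An `f`-coloring: in each color class every vertex `v` has degree at most `f v`. -/
def FColoring (ends : E → Sym2 V) (f : V → ℕ) {k : ℕ} (C : E → Fin k) : Prop :=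
  ∀ c : Fin k, ∀ v, degree (subEnds ends fun e => C e = c) v ≤ f v

/-- The `f`-chromatic index `χ'_f(G)`. -/
def fChromaticIndex (ends : E → Sym2 V) (f : V → ℕ) : ℕ :=
  sInf {k | ∃ C : E → Fin k, FColoring ends f C}

/-- `G` is bipartite: the vertices can be split into two sides so that every
edge has one endpoint on each side. -/
def Bipartite (ends : E → Sym2 V) : Prop :=
  ∃ P : V → Prop, ∀ e : E, ∃ u v, ends e = s(u, v) ∧ P u ∧ ¬ P v

/-- The list analogue `χ'_{(g,h),ℓ}(G)`: the least `k` such that every list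
assignment with lists of size at least `k` admits a coloring from the lists in
which each color class is `(g,h)`-orientable. -/
def ghListChromaticIndex (ends : E → Sym2 V) (g h : V → ℕ∞) : ℕ :=
  sInf {k | ∀ L : E → Finset ℕ, (∀ e, k ≤ (L e).card) →
    ∃ C : E → ℕ, (∀ e, C e ∈ L e) ∧
      ∀ c : ℕ, GHOrientable (subEnds ends fun e => C e = c) g h}

/-- The list degree-`f` pseudoarboricity `pa_{f,ℓ}(G)`. -/
def pafList (ends : E → Sym2 V) (f : V → ℕ) : ℕ :=
  sInf {k | ∀ L : E → Finset ℕ, (∀ e, k ≤ (L e).card) →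
    ∃ C : E → ℕ, (∀ e, C e ∈ L e) ∧
      ∀ c : ℕ, IsPseudoforest (subEnds ends fun e => C e = c) ∧
        ∀ v, degree (subEnds ends fun e => C e = c) v ≤ f v}

/-- The list `f`-chromatic index `χ'_{f,ℓ}(G)`. -/
def fListChromaticIndex (ends : E → Sym2 V) (f : V → ℕ) : ℕ :=
  sInf {k | ∀ L : E → Finset ℕ, (∀ e, k ≤ (L e).card) →
    ∃ C : E → ℕ, (∀ e, C e ∈ L e) ∧
      ∀ c : ℕ, ∀ v, degree (subEnds ends fun e => C e = c) v ≤ f v}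


set_option linter.unusedSectionVars false

/- ===== auxiliary development ===== -/

def contrib (p : V × V) (v : V) : ℤ :=
  (if p.1 = v then 1 else 0) - (if p.2 = v then 1 else 0)

def sdeg (D : E → V × V) (v : V) : ℤ := (outDeg D v : ℤ) - (inDeg D v : ℤ)

lemma contrib_swap (p : V × V) (v : V) : contrib p.swap v = - contrib p v := by
  simp [contrib, Prod.swap]

lemma sdeg_eq_sum (D : E → V × V) (v : V) : sdeg D v = ∑ e, contrib (D e) v := by
  unfold sdeg outDeg inDeg
  rw [Finset.card_filter, Finset.card_filter]
  push_cast
  rw [← Finset.sum_sub_distrib]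
  rfl

inductive DWalk (D : E → V × V) : V → List E → V → Prop
  | nil (u : V) : DWalk D u [] u
  | cons {u w x : V} {e : E} {es : List E} :
      D e = (u, w) → DWalk D w es x → DWalk D u (e :: es) x

lemma dwalk_of_rtg {D : E → V × V} {u x : V}
    (h : Relation.ReflTransGen (fun a b => ∃ e, D e = (a, b)) u x) :
    ∃ es, DWalk D u es x := by
  induction h using Relation.ReflTransGen.head_induction_on with
  | refl => exact ⟨[], DWalk.nil x⟩
  | head h' _ ih =>
    obtain ⟨e, he⟩ := h'
    obtain ⟨es, hw⟩ := ih
    exact ⟨e :: es, DWalk.cons he hw⟩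

lemma dwalk_append_split {D : E → V × V} {x : V} :
    ∀ (l₁ l₂ : List E) (u : V), DWalk D u (l₁ ++ l₂) x →
      ∃ m, DWalk D u l₁ m ∧ DWalk D m l₂ x := by
  intro l₁
  induction l₁ with
  | nil => intro l₂ u h; exact ⟨u, DWalk.nil u, h⟩
  | cons e es ih =>
    intro l₂ u h
    cases h with
    | cons he hw =>
      obtain ⟨m, h1, h2⟩ := ih l₂ _ hw
      exact ⟨m, DWalk.cons he h1, h2⟩

lemma dwalk_tails_nodup {D : E → V × V} {x : V} :
    ∀ {es : List E} {u : V}, DWalk D u es x →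
      ∃ es', DWalk D u es' x ∧ (es'.map fun e => (D e).1).Nodup := by
  intro es u h
  induction h with
  | nil u => exact ⟨[], DWalk.nil u, by simp⟩
  | @cons u w x' e es he hw ih =>
    obtain ⟨es', hw', hnd⟩ := ih
    by_cases hu : u ∈ es'.map fun e => (D e).1
    · obtain ⟨e', he'mem, he'⟩ := List.mem_map.mp hu
      obtain ⟨l₁, l₂, rfl⟩ := List.append_of_mem he'mem
      obtain ⟨m, h1, h2⟩ := dwalk_append_split l₁ (e' :: l₂) _ hw'
      cases h2 with
      | cons he2 hw2 =>
        have hm : m = u := by rw [he2] at he'; exact he'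
        subst hm
        refine ⟨e' :: l₂, DWalk.cons he2 hw2, ?_⟩
        have := hnd
        rw [List.map_append] at this
        exact this.of_append_right
    · refine ⟨e :: es', DWalk.cons he hw', ?_⟩
      rw [List.map_cons, List.nodup_cons]
      refine ⟨?_, hnd⟩
      rw [he]
      exact hu

lemma walk_contrib_sum {D : E → V × V} {u x : V} {es : List E}
    (h : DWalk D u es x) (v : V) :
    (es.map fun e => contrib (D e) v).sum
      = (if u = v then 1 else 0) - (if x = v then 1 else 0) := by
  induction h with
  | nil u => simp
  | cons he hw ih =>
    rw [List.map_cons, List.sum_cons, ih, he]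
    unfold contrib
    ring

def flipOn (D : E → V × V) (es : List E) : E → V × V :=
  fun e => if e ∈ es then (D e).swap else D e

lemma flipOn_sym2 (D : E → V × V) (es : List E) (e : E) :
    Sym2.mk (flipOn D es e).1 (flipOn D es e).2 = Sym2.mk (D e).1 (D e).2 := by
  unfold flipOn
  split
  · exact Sym2.mk_prod_swap_eq
  · rfl

lemma sdeg_flipOn {D : E → V × V} {u x : V} {es : List E}
    (h : DWalk D u es x) (hnd : es.Nodup) (v : V) :
    sdeg (flipOn D es) v
      = sdeg D v - 2 * ((if u = v then 1 else 0) - (if x = v then 1 else 0)) := by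
  rw [sdeg_eq_sum, sdeg_eq_sum, ← walk_contrib_sum h v, ← List.sum_toFinset _ hnd]
  have h1 : ∑ e ∈ es.toFinset, contrib (D e) v = ∑ e : E, if e ∈ es then contrib (D e) v else 0 := by
    rw [← Finset.sum_filter]
    apply Finset.sum_congr _ (fun _ _ => rfl)
    ext e; simp
  rw [h1, Finset.mul_sum, ← Finset.sum_sub_distrib]
  apply Finset.sum_congr rfl
  intro e _
  by_cases he : e ∈ es <;> simp [flipOn, he, contrib_swap] <;> ring

def reachdir (D : E → V × V) (u x : V) : Prop :=
  Relation.ReflTransGen (fun a b => ∃ e, D e = (a, b)) u x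

lemma sum_sdeg_reach_nonpos (D : E → V × V) (u : V) :
    ∑ v ∈ Finset.univ.filter (reachdir D u ·), sdeg D v ≤ 0 := by
  set R := Finset.univ.filter (reachdir D u ·) with hR
  have hclosed : ∀ e : E, (D e).1 ∈ R → (D e).2 ∈ R := by
    intro e h1
    rw [hR, Finset.mem_filter] at h1 ⊢
    exact ⟨Finset.mem_univ _, h1.2.tail ⟨e, Prod.mk.eta.symm ▸ rfl⟩⟩
  calc ∑ v ∈ R, sdeg D v = ∑ v ∈ R, ∑ e, contrib (D e) v := by
        exact Finset.sum_congr rfl fun v _ => sdeg_eq_sum D v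
    _ = ∑ e, ∑ v ∈ R, contrib (D e) v := Finset.sum_comm
    _ ≤ 0 := by
        apply Finset.sum_nonpos
        intro e _
        unfold contrib
        rw [Finset.sum_sub_distrib, Finset.sum_ite_eq R (D e).1 (fun _ => (1:ℤ)),
          Finset.sum_ite_eq R (D e).2 (fun _ => (1:ℤ))]
        by_cases h1 : (D e).1 ∈ R
        · simp [h1, hclosed e h1]
        · by_cases h2 : (D e).2 ∈ R <;> simp [h1, h2]

lemma exists_deficit {D : E → V × V} {u : V} (h : 2 ≤ sdeg D u) :
    ∃ x, reachdir D u x ∧ sdeg D x ≤ -1 := by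
  by_contra hc
  push_neg at hc
  have hpos : (0:ℤ) < ∑ v ∈ Finset.univ.filter (reachdir D u ·), sdeg D v := by
    apply Finset.sum_pos'
    · intro v hv
      rw [Finset.mem_filter] at hv
      have := hc v hv.2
      omega
    · refine ⟨u, ?_, by omega⟩
      rw [Finset.mem_filter]
      exact ⟨Finset.mem_univ _, Relation.ReflTransGen.refl⟩
  have := sum_sdeg_reach_nonpos D u
  omega

lemma flip_decrease {D : E → V × V} {u : V}
    (h2 : 2 ≤ sdeg D u) :
    ∃ D' : E → V × V, (∀ e, Sym2.mk (D' e).1 (D' e).2 = Sym2.mk (D e).1 (D e).2) ∧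
      ∑ v, (sdeg D' v)^2 < ∑ v, (sdeg D v)^2 := by
  obtain ⟨x, hr, hx⟩ := exists_deficit h2
  have hux : u ≠ x := by intro h; rw [h] at h2; omega
  obtain ⟨es, hw⟩ := dwalk_of_rtg hr
  obtain ⟨es', hw', hnd'⟩ := dwalk_tails_nodup hw
  have hnd : es'.Nodup := hnd'.of_map _
  refine ⟨flipOn D es', flipOn_sym2 D es', ?_⟩
  apply Finset.sum_lt_sum
  · intro v _
    rw [sdeg_flipOn hw' hnd v]
    by_cases hvu : u = v
    · subst hvu
      rw [if_pos rfl, if_neg (Ne.symm hux)]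
      have hring : sdeg D u - 2 * ((1:ℤ) - 0) = sdeg D u - 2 := by ring
      rw [hring]
      nlinarith [h2]
    · by_cases hvx : x = v
      · subst hvx
        rw [if_neg hvu, if_pos rfl]
        have hring : sdeg D x - 2 * ((0:ℤ) - 1) = sdeg D x + 2 := by ring
        rw [hring]
        nlinarith [hx]
      · simp [hvu, hvx]
  · refine ⟨u, Finset.mem_univ u, ?_⟩
    rw [sdeg_flipOn hw' hnd u]
    rw [if_pos rfl, if_neg (Ne.symm hux)]
    have hring : sdeg D u - 2 * ((1:ℤ) - 0) = sdeg D u - 2 := by ring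
    rw [hring]
    nlinarith [h2]

lemma flip_decrease' {D : E → V × V} {u : V}
    (h2 : 2 ≤ sdeg D u ∨ sdeg D u ≤ -2) :
    ∃ D' : E → V × V, (∀ e, Sym2.mk (D' e).1 (D' e).2 = Sym2.mk (D e).1 (D e).2) ∧
      ∑ v, (sdeg D' v)^2 < ∑ v, (sdeg D v)^2 := by
  rcases h2 with h2 | h2
  · exact flip_decrease h2
  · have hrev : ∀ v, sdeg (fun e => (D e).swap) v = - sdeg D v := by
      intro v
      rw [sdeg_eq_sum, sdeg_eq_sum, ← Finset.sum_neg_distrib]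
      exact Finset.sum_congr rfl fun e _ => contrib_swap (D e) v
    have h2' : 2 ≤ sdeg (fun e => (D e).swap) u := by rw [hrev]; omega
    obtain ⟨D', hsym, hlt⟩ := flip_decrease h2'
    refine ⟨D', fun e => (hsym e).trans Sym2.mk_prod_swap_eq, ?_⟩
    calc ∑ v, (sdeg D' v)^2 < ∑ v, (sdeg (fun e => (D e).swap) v)^2 := hlt
      _ = ∑ v, (sdeg D v)^2 := Finset.sum_congr rfl fun v _ => by rw [hrev]; ring

theorem balanced_orientation (D : E → V × V) :
    ∃ D' : E → V × V, (∀ e, Sym2.mk (D' e).1 (D' e).2 = Sym2.mk (D e).1 (D e).2) ∧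
      ∀ v, -1 ≤ sdeg D' v ∧ sdeg D' v ≤ 1 := by
  suffices h : ∀ n (D : E → V × V), (∑ v, (sdeg D v)^2).toNat ≤ n →
      ∃ D' : E → V × V, (∀ e, Sym2.mk (D' e).1 (D' e).2 = Sym2.mk (D e).1 (D e).2) ∧
        ∀ v, -1 ≤ sdeg D' v ∧ sdeg D' v ≤ 1 by
    exact h _ D le_rfl
  intro n
  induction n with
  | zero =>
    intro D hn
    by_cases hb : ∀ v, -1 ≤ sdeg D v ∧ sdeg D v ≤ 1
    · exact ⟨D, fun _ => rfl, hb⟩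
    · exfalso
      push_neg at hb
      obtain ⟨u, hu⟩ := hb
      have h2 : 2 ≤ sdeg D u ∨ sdeg D u ≤ -2 := by omega
      obtain ⟨D', _, hlt⟩ := flip_decrease' h2
      have hnn : (0:ℤ) ≤ ∑ v, (sdeg D' v)^2 :=
        Finset.sum_nonneg fun v _ => sq_nonneg _
      have hnn2 : (0:ℤ) ≤ ∑ v, (sdeg D v)^2 :=
        Finset.sum_nonneg fun v _ => sq_nonneg _
      omega
  | succ n ih =>
    intro D hn
    by_cases hb : ∀ v, -1 ≤ sdeg D v ∧ sdeg D v ≤ 1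
    · exact ⟨D, fun _ => rfl, hb⟩
    · push_neg at hb
      obtain ⟨u, hu⟩ := hb
      have h2 : 2 ≤ sdeg D u ∨ sdeg D u ≤ -2 := by omega
      obtain ⟨D₂, hsym, hlt⟩ := flip_decrease' h2
      have hnn : (0:ℤ) ≤ ∑ v, (sdeg D₂ v)^2 :=
        Finset.sum_nonneg fun v _ => sq_nonneg _
      have hle : (∑ v, (sdeg D₂ v)^2).toNat ≤ n := by omega
      obtain ⟨D', hsym', hbal⟩ := ih D₂ hle
      exact ⟨D', fun e => (hsym' e).trans (hsym e), hbal⟩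


/- ===== part 2 ===== -/

lemma mult_mk (v a b : V) :
    mult v s(a, b) = (if a = v then 1 else 0) + (if b = v then 1 else 0) := by
  rfl

lemma degree_subEnds (ends : E → Sym2 V) (P : E → Prop) [DecidablePred P] [Fintype {e // P e}] (v : V) :
    degree (subEnds ends P) v = ∑ e ∈ Finset.univ.filter P, mult v (ends e) := by
  rw [degree]
  exact (Finset.sum_subtype (Finset.univ.filter P) (fun x => by simp)
    (fun e => mult v (ends e))).symm

lemma outDeg_eq_sum {E' : Type} [Fintype E'] (D : E' → V × V) (v : V) :
    outDeg D v = ∑ e : E', if (D e).1 = v then 1 else 0 :=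
  Finset.card_filter _ _

lemma inDeg_eq_sum {E' : Type} [Fintype E'] (D : E' → V × V) (v : V) :
    inDeg D v = ∑ e : E', if (D e).2 = v then 1 else 0 :=
  Finset.card_filter _ _

lemma recolor_step {k : ℕ} (ends : E → Sym2 V) (P : V → Prop)
    (hbipP : ∀ e, ∃ a b, ends e = s(a, b) ∧ P a ∧ ¬ P b)
    (C : E → Fin k) (c₁ c₂ : Fin k) (hc : c₁ ≠ c₂) :
    ∃ C' : E → Fin k,
      (∀ c : Fin k, c ≠ c₁ → c ≠ c₂ → ∀ v,
          degree (subEnds ends fun e => C' e = c) v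
            = degree (subEnds ends fun e => C e = c) v) ∧
      (∀ v, degree (subEnds ends fun e => C' e = c₁) v
              + degree (subEnds ends fun e => C' e = c₂) v
          = degree (subEnds ends fun e => C e = c₁) v
              + degree (subEnds ends fun e => C e = c₂) v) ∧
      (∀ v, degree (subEnds ends fun e => C' e = c₁) v
              ≤ degree (subEnds ends fun e => C' e = c₂) v + 1
          ∧ degree (subEnds ends fun e => C' e = c₂) v
              ≤ degree (subEnds ends fun e => C' e = c₁) v + 1) := by
  set S : E → Prop := fun e => C e = c₁ ∨ C e = c₂ with hS
  -- initial orientation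
  have hex0 : ∀ s : Sym2 V, ∃ p : V × V, Sym2.mk p.1 p.2 = s := fun s =>
    Sym2.inductionOn s fun x y => ⟨(x, y), rfl⟩
  have hex : ∀ eb : {e // S e}, ∃ p : V × V, Sym2.mk p.1 p.2 = ends eb.1 :=
    fun eb => hex0 (ends eb.1)
  set D₀ : {e // S e} → V × V := fun eb => Classical.choose (hex eb) with hD₀
  obtain ⟨D, hDsym, hDbal⟩ := balanced_orientation D₀
  have hends : ∀ eb : {e // S e}, Sym2.mk (D eb).1 (D eb).2 = ends eb.1 :=
    fun eb => (hDsym eb).trans (Classical.choose_spec (hex eb))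
  set C' : E → Fin k :=
    fun e => if h : S e then (if P (D ⟨e, h⟩).1 then c₁ else c₂) else C e with hC'
  have hC'S : ∀ e (h : S e), C' e = if P (D ⟨e, h⟩).1 then c₁ else c₂ :=
    fun e h => dif_pos h
  have hC'nS : ∀ e, ¬ S e → C' e = C e := fun e h => dif_neg h
  -- per-edge structure
  have hsplit : ∀ eb : {e // S e}, ∃ a b, P a ∧ ¬ P b ∧
      (D eb = (a, b) ∨ D eb = (b, a)) ∧ ends eb.1 = s(a, b) := by
    intro eb
    obtain ⟨a, b, hab, Pa, Pb⟩ := hbipP eb.1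
    have h := (hends eb).trans hab
    rcases (Sym2.mk_eq_mk_iff (q := (a, b))).mp h with h' | h'
    · exact ⟨a, b, Pa, Pb, Or.inl h', hab⟩
    · exact ⟨a, b, Pa, Pb, Or.inr h', hab⟩
  -- expressing new class degrees as subtype sums
  have hdeg1 : ∀ v, degree (subEnds ends fun e => C' e = c₁) v
      = ∑ eb : {e // S e}, if P (D eb).1 then mult v (ends eb.1) else 0 := by
    intro v
    rw [degree_subEnds]
    have hfil : Finset.univ.filter (fun e => C' e = c₁)
        = (Finset.univ.filter S).filter (fun e => C' e = c₁) := by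
      ext e
      simp only [Finset.mem_filter, Finset.mem_univ, true_and]
      constructor
      · intro h
        refine ⟨?_, h⟩
        by_contra hSe
        rw [hC'nS e hSe] at h
        exact hSe (Or.inl h)
      · exact fun h => h.2
    rw [hfil, Finset.sum_filter, Finset.sum_subtype (p := S) (Finset.univ.filter S) (by intro x; simp) _]
    apply Finset.sum_congr rfl
    intro eb _
    rw [hC'S eb.1 eb.2]
    by_cases hp : P (D eb).1
    · rw [if_pos hp, if_pos hp, if_pos rfl]
    · rw [if_neg hp, if_neg hp, if_neg (Ne.symm hc)]
  have hdeg2 : ∀ v, degree (subEnds ends fun e => C' e = c₂) v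
      = ∑ eb : {e // S e}, if P (D eb).1 then 0 else mult v (ends eb.1) := by
    intro v
    rw [degree_subEnds]
    have hfil : Finset.univ.filter (fun e => C' e = c₂)
        = (Finset.univ.filter S).filter (fun e => C' e = c₂) := by
      ext e
      simp only [Finset.mem_filter, Finset.mem_univ, true_and]
      constructor
      · intro h
        refine ⟨?_, h⟩
        by_contra hSe
        rw [hC'nS e hSe] at h
        exact hSe (Or.inr h)
      · exact fun h => h.2
    rw [hfil, Finset.sum_filter, Finset.sum_subtype (p := S) (Finset.univ.filter S) (by intro x; simp) _]
    apply Finset.sum_congr rfl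
    intro eb _
    rw [hC'S eb.1 eb.2]
    by_cases hp : P (D eb).1
    · rw [if_pos hp, if_pos hp, if_neg hc]
    · rw [if_neg hp, if_neg hp, if_pos rfl]
  -- old degrees
  have convgen : ∀ (v : V) (c : Fin k), (∀ e, C e = c → S e) →
      ∑ e ∈ Finset.univ.filter (fun e => C e = c), mult v (ends e)
        = ∑ eb : {e // S e}, if C eb.1 = c then mult v (ends eb.1) else 0 := by
    intro v c hcS
    have hfil : Finset.univ.filter (fun e => C e = c)
        = (Finset.univ.filter S).filter (fun e => C e = c) := by
      ext e
      simp only [Finset.mem_filter, Finset.mem_univ, true_and]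
      exact ⟨fun h => ⟨hcS e h, h⟩, fun h => h.2⟩
    rw [hfil, Finset.sum_filter,
      Finset.sum_subtype (p := S) (Finset.univ.filter S) (fun x => by simp)
        (fun e => if C e = c then mult v (ends e) else 0)]
  have holdsum : ∀ v, degree (subEnds ends fun e => C e = c₁) v
      + degree (subEnds ends fun e => C e = c₂) v
      = ∑ eb : {e // S e}, mult v (ends eb.1) := by
    intro v
    rw [degree_subEnds, degree_subEnds, convgen v c₁ (fun e h => Or.inl h),
      convgen v c₂ (fun e h => Or.inr h), ← Finset.sum_add_distrib]
    apply Finset.sum_congr rfl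
    intro eb _
    rcases eb.2 with h | h
    · rw [if_pos h, if_neg (h ▸ hc), add_zero]
    · rw [if_pos h, if_neg (h ▸ Ne.symm hc), zero_add]
  have hnewsum : ∀ v, degree (subEnds ends fun e => C' e = c₁) v
      + degree (subEnds ends fun e => C' e = c₂) v
      = ∑ eb : {e // S e}, mult v (ends eb.1) := by
    intro v
    rw [hdeg1, hdeg2, ← Finset.sum_add_distrib]
    apply Finset.sum_congr rfl
    intro eb _
    by_cases hp : P (D eb).1
    · rw [if_pos hp, if_pos hp, add_zero]
    · rw [if_neg hp, if_neg hp, zero_add]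
  -- identification with out/in degrees
  have hkey1 : ∀ v, P v →
      degree (subEnds ends fun e => C' e = c₁) v = outDeg D v := by
    intro v hv
    rw [hdeg1, outDeg_eq_sum]
    apply Finset.sum_congr rfl
    intro eb _
    obtain ⟨a, b, Pa, Pb, hor, hab⟩ := hsplit eb
    have hbv : b ≠ v := fun h => Pb (h ▸ hv)
    rcases hor with h | h <;> rw [h, hab, mult_mk]
    · rw [if_pos Pa, if_neg hbv, add_zero]
    · rw [if_neg Pb, if_neg hbv]
  have hkey2 : ∀ v, P v →
      degree (subEnds ends fun e => C' e = c₂) v = inDeg D v := by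
    intro v hv
    rw [hdeg2, inDeg_eq_sum]
    apply Finset.sum_congr rfl
    intro eb _
    obtain ⟨a, b, Pa, Pb, hor, hab⟩ := hsplit eb
    have hbv : b ≠ v := fun h => Pb (h ▸ hv)
    rcases hor with h | h <;> rw [h, hab, mult_mk]
    · rw [if_pos Pa, if_neg hbv]
    · rw [if_neg Pb, if_neg hbv, add_zero]
  have hkey3 : ∀ v, ¬ P v →
      degree (subEnds ends fun e => C' e = c₁) v = inDeg D v := by
    intro v hv
    rw [hdeg1, inDeg_eq_sum]
    apply Finset.sum_congr rfl
    intro eb _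
    obtain ⟨a, b, Pa, Pb, hor, hab⟩ := hsplit eb
    have hav : a ≠ v := fun h => hv (h ▸ Pa)
    rcases hor with h | h <;> rw [h, hab, mult_mk]
    · rw [if_pos Pa, if_neg hav, zero_add]
    · rw [if_neg Pb, if_neg hav]
  have hkey4 : ∀ v, ¬ P v →
      degree (subEnds ends fun e => C' e = c₂) v = outDeg D v := by
    intro v hv
    rw [hdeg2, outDeg_eq_sum]
    apply Finset.sum_congr rfl
    intro eb _
    obtain ⟨a, b, Pa, Pb, hor, hab⟩ := hsplit eb
    have hav : a ≠ v := fun h => hv (h ▸ Pa)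
    rcases hor with h | h <;> rw [h, hab, mult_mk]
    · rw [if_pos Pa, if_neg hav]
    · rw [if_neg Pb, if_neg hav, zero_add]
  refine ⟨C', ?_, ?_, ?_⟩
  · intro c hc1 hc2 v
    have hfil : Finset.univ.filter (fun e => C' e = c)
        = Finset.univ.filter (fun e => C e = c) := by
      ext e
      simp only [Finset.mem_filter, Finset.mem_univ, true_and]
      by_cases hSe : S e
      · rw [hC'S e hSe]
        constructor
        · intro h
          exfalso
          by_cases hp : P (D ⟨e, hSe⟩).1
          · rw [if_pos hp] at h; exact hc1 h.symm
          · rw [if_neg hp] at h; exact hc2 h.symm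
        · intro h
          exfalso
          rcases hSe with h' | h'
          · exact hc1 (h.symm.trans h')
          · exact hc2 (h.symm.trans h')
      · rw [hC'nS e hSe]
    rw [degree_subEnds, degree_subEnds, hfil]
  · intro v
    rw [hnewsum v, holdsum v]
  · intro v
    have hb := hDbal v
    unfold sdeg at hb
    by_cases hv : P v
    · rw [hkey1 v hv, hkey2 v hv]
      omega
    · rw [hkey3 v hv, hkey4 v hv]
      omega


/- ===== part 3 ===== -/

lemma sq_pair_le {a b a' b' : ℤ} (hsum : a' + b' = a + b) (h1 : a' ≤ b' + 1)
    (h2 : b' ≤ a' + 1) : a'^2 + b'^2 ≤ a^2 + b^2 := by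
  by_cases h0 : a = b
  · have ha : a' = a ∧ b' = b := by omega
    rw [ha.1, ha.2]
  · have h5 : a - b ≠ 0 := sub_ne_zero.mpr h0
    have h6 := Int.one_le_abs h5
    have h4 : 1 ≤ (a - b)^2 := by nlinarith [abs_nonneg (a - b), sq_abs (a - b)]
    have h7 : (a' - b')^2 ≤ 1 := by nlinarith
    have e1 : 2*(a'^2 + b'^2) = (a' + b')^2 + (a' - b')^2 := by ring
    have e2 : 2*(a^2 + b^2) = (a + b)^2 + (a - b)^2 := by ring
    rw [hsum] at e1
    linarith

lemma sq_pair_lt {a b a' b' : ℤ} (hsum : a' + b' = a + b) (h1 : a' ≤ b' + 1)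
    (h2 : b' ≤ a' + 1) (hbad : b + 2 ≤ a) : a'^2 + b'^2 < a^2 + b^2 := by
  have h7 : (a' - b')^2 ≤ 1 := by nlinarith
  have h6 : 4 ≤ (a - b)^2 := by nlinarith
  have e1 : 2*(a'^2 + b'^2) = (a' + b')^2 + (a' - b')^2 := by ring
  have e2 : 2*(a^2 + b^2) = (a + b)^2 + (a - b)^2 := by ring
  rw [hsum] at e1
  linarith

lemma degree_eq_sum_classes (ends : E → Sym2 V) {k : ℕ} (C : E → Fin k) (v : V) :
    degree ends v = ∑ c, degree (subEnds ends fun e => C e = c) v := by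
  symm
  calc ∑ c, degree (subEnds ends fun e => C e = c) v
      = ∑ c, ∑ e ∈ Finset.univ.filter (fun e => C e = c), mult v (ends e) :=
        Finset.sum_congr rfl fun c _ => degree_subEnds ends _ v
    _ = ∑ e, mult v (ends e) := Finset.sum_fiberwise _ _ _
    _ = degree ends v := rfl

lemma fcoloring_exists (ends : E → Sym2 V) (f : V → ℕ) {k : ℕ}
    (hbip : Bipartite ends) (hdeg : ∀ v, degree ends v ≤ k * f v) :
    ∃ C : E → Fin k, FColoring ends f C := by
  obtain ⟨P, hP⟩ := hbip
  by_cases hE : IsEmpty E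
  · refine ⟨fun e => (hE.elim e), ?_⟩
    intro c v
    haveI : IsEmpty {e // (fun e => (hE.elim e : Fin k) = c) e} := ⟨fun eb => hE.elim eb.1⟩
    rw [degree, Finset.univ_eq_empty, Finset.sum_empty]
    exact Nat.zero_le _
  have hk : 0 < k := by
    rw [not_isEmpty_iff] at hE
    obtain ⟨e₀⟩ := hE
    obtain ⟨a, b, hab, _, _⟩ := hP e₀
    have h1 : 1 ≤ degree ends a := by
      rw [degree]
      calc 1 ≤ mult a (ends e₀) := by rw [hab, mult_mk, if_pos rfl]; omega
        _ ≤ ∑ e, mult a (ends e) :=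
          Finset.single_le_sum (f := fun e => mult a (ends e))
            (fun _ _ => Nat.zero_le _) (Finset.mem_univ e₀)
    have h2 := hdeg a
    rcases Nat.eq_zero_or_pos k with hk0 | hk0
    · rw [hk0, zero_mul] at h2; omega
    · exact hk0
  suffices h : ∀ (n : ℕ) (C : E → Fin k),
      (∑ v, ∑ c, (degree (subEnds ends fun e => C e = c) v)^2) ≤ n →
      ∃ C' : E → Fin k, FColoring ends f C' by
    exact h _ (fun _ => ⟨0, hk⟩) le_rfl
  intro n
  induction n using Nat.strong_induction_on with
  | _ n ih =>
    intro C hC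
    by_cases hF : FColoring ends f C
    · exact ⟨C, hF⟩
    unfold FColoring at hF
    push_neg at hF
    obtain ⟨c₁, v₀, hbad⟩ := hF
    have hc2 : ∃ c₂, degree (subEnds ends fun e => C e = c₂) v₀ < f v₀ := by
      by_contra hc2
      push_neg at hc2
      have hlt : k * f v₀ < ∑ c, degree (subEnds ends fun e => C e = c) v₀ := by
        have h := Finset.sum_lt_sum (f := fun _ : Fin k => f v₀)
          (g := fun c => degree (subEnds ends fun e => C e = c) v₀)
          (fun c _ => hc2 c) ⟨c₁, Finset.mem_univ _, hbad⟩
        calc k * f v₀ = ∑ _c : Fin k, f v₀ := by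
              simp [Finset.sum_const, Finset.card_univ, mul_comm]
          _ < _ := h
      rw [← degree_eq_sum_classes ends C v₀] at hlt
      have := hdeg v₀
      omega
    obtain ⟨c₂, hc₂⟩ := hc2
    have hcne : c₁ ≠ c₂ := by
      intro h
      rw [h] at hbad
      omega
    obtain ⟨C', hrest, hsum2, hbal⟩ := recolor_step ends P hP C c₁ c₂ hcne
    have h2mem : c₂ ∈ Finset.univ.erase c₁ :=
      Finset.mem_erase.mpr ⟨Ne.symm hcne, Finset.mem_univ _⟩
    have split2 : ∀ (g : Fin k → ℕ), ∑ c, g c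
        = g c₁ + g c₂ + ∑ c ∈ (Finset.univ.erase c₁).erase c₂, g c := by
      intro g
      have e1 := Finset.sum_erase_add Finset.univ g (Finset.mem_univ c₁)
      have e2 := Finset.sum_erase_add (Finset.univ.erase c₁) g h2mem
      omega
    have hrest' : ∀ v, ∑ c ∈ (Finset.univ.erase c₁).erase c₂,
        (degree (subEnds ends fun e => C' e = c) v)^2
        = ∑ c ∈ (Finset.univ.erase c₁).erase c₂,
        (degree (subEnds ends fun e => C e = c) v)^2 := by
      intro v
      apply Finset.sum_congr rfl
      intro c hcm
      rw [Finset.mem_erase] at hcm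
      have hcm2 := Finset.mem_erase.mp hcm.2
      rw [hrest c hcm2.1 hcm.1 v]
    have hpair : ∀ v, (degree (subEnds ends fun e => C' e = c₁) v)^2
        + (degree (subEnds ends fun e => C' e = c₂) v)^2
        ≤ (degree (subEnds ends fun e => C e = c₁) v)^2
        + (degree (subEnds ends fun e => C e = c₂) v)^2 := by
      intro v
      have h := sq_pair_le (a := (degree (subEnds ends fun e => C e = c₁) v : ℤ))
        (b := (degree (subEnds ends fun e => C e = c₂) v : ℤ))
        (a' := (degree (subEnds ends fun e => C' e = c₁) v : ℤ))
        (b' := (degree (subEnds ends fun e => C' e = c₂) v : ℤ))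
        (by exact_mod_cast congrArg (fun x : ℕ => (x : ℤ)) (hsum2 v))
        (by exact_mod_cast (hbal v).1) (by exact_mod_cast (hbal v).2)
      exact_mod_cast h
    have hle : ∀ v, ∑ c, (degree (subEnds ends fun e => C' e = c) v)^2
        ≤ ∑ c, (degree (subEnds ends fun e => C e = c) v)^2 := by
      intro v
      rw [split2, split2, hrest' v]
      have := hpair v
      omega
    have hstrict : ∑ c, (degree (subEnds ends fun e => C' e = c) v₀)^2
        < ∑ c, (degree (subEnds ends fun e => C e = c) v₀)^2 := by
      rw [split2, split2, hrest' v₀]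
      have h := sq_pair_lt (a := (degree (subEnds ends fun e => C e = c₁) v₀ : ℤ))
        (b := (degree (subEnds ends fun e => C e = c₂) v₀ : ℤ))
        (a' := (degree (subEnds ends fun e => C' e = c₁) v₀ : ℤ))
        (b' := (degree (subEnds ends fun e => C' e = c₂) v₀ : ℤ))
        (by exact_mod_cast congrArg (fun x : ℕ => (x : ℤ)) (hsum2 v₀))
        (by exact_mod_cast (hbal v₀).1) (by exact_mod_cast (hbal v₀).2)
        (by push_cast; omega)
      have h' : (degree (subEnds ends fun e => C' e = c₁) v₀)^2
          + (degree (subEnds ends fun e => C' e = c₂) v₀)^2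
          < (degree (subEnds ends fun e => C e = c₁) v₀)^2
          + (degree (subEnds ends fun e => C e = c₂) v₀)^2 := by exact_mod_cast h
      omega
    have hlt : (∑ v, ∑ c, (degree (subEnds ends fun e => C' e = c) v)^2)
        < (∑ v, ∑ c, (degree (subEnds ends fun e => C e = c) v)^2) :=
      Finset.sum_lt_sum (fun v _ => hle v) ⟨v₀, Finset.mem_univ _, hstrict⟩
    exact ih _ (by omega) C' le_rfl

theorem fChromaticIndex_of_bipartite_aux (ends : E → Sym2 V) (f : V → ℕ)
    (hf : ∀ v, 1 ≤ f v) (hbip : Bipartite ends) :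
    fChromaticIndex ends f = fMaxDegree ends f := by
  have hdeg : ∀ v, degree ends v ≤ fMaxDegree ends f * f v := by
    intro v
    have h1 : cdiv (degree ends v) (f v) ≤ fMaxDegree ends f :=
      Finset.le_sup (f := fun v => cdiv (degree ends v) (f v)) (Finset.mem_univ v)
    have hb := hf v
    unfold cdiv at h1
    rw [Nat.div_le_iff_le_mul_add_pred (by omega)] at h1
    generalize hm : f v * fMaxDegree ends f = m at h1
    have h3 : degree ends v ≤ m := by omega
    rw [← hm, mul_comm] at h3
    exact h3
  obtain ⟨C, hC⟩ := fcoloring_exists ends f hbip hdeg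
  apply le_antisymm
  · exact Nat.sInf_le ⟨C, hC⟩
  · refine le_csInf ⟨fMaxDegree ends f, ⟨C, hC⟩⟩ ?_
    rintro m ⟨Cm, hCm⟩
    apply Finset.sup_le
    intro v _
    have h1 : degree ends v ≤ m * f v := by
      rw [degree_eq_sum_classes ends Cm v]
      calc ∑ c, degree (subEnds ends fun e => Cm e = c) v ≤ ∑ _c : Fin m, f v :=
            Finset.sum_le_sum fun c _ => hCm c v
        _ = m * f v := by simp [Finset.sum_const, Finset.card_univ, mul_comm]
    unfold cdiv
    rw [Nat.div_le_iff_le_mul_add_pred (by have := hf v; omega)]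
    generalize hm : f v * m = m' at *
    have : degree ends v ≤ m' := by rw [← hm, mul_comm]; exact h1
    have hb := hf v
    omega


/-- Corollary 3.9(i), Hakimi–Kariv: for every bipartite multigraph
`G` and `f` with `f(v) ≥ 1` everywhere, `χ'_f(G) = Δ_f(G)`. -/
theorem fChromaticIndex_of_bipartite {V E : Type} [Fintype V] [Fintype E] [DecidableEq V]
    (ends : E → Sym2 V) (f : V → ℕ) (hf : ∀ v, 1 ≤ f v) (hbip : Bipartite ends) :
    fChromaticIndex ends f = fMaxDegree ends f := by
  exact fChromaticIndex_of_bipartite_aux ends f hf hbip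

end MG
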